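/- arXiv:2311.16902 — 4 statements merged into one kernel-verified Lean document; each statement's English description precedes it below -/
import Mathlib

section
/- Let a, a⋆, b, b⋆, R, R⋆, E ∈ ℂ with a ≠ 0, a⋆ ≠ 0, E ≠ 0, 1 + R⋆R ≠ 0, a + bR⋆ ≠ 0, a⋆ + b⋆R ≠ 0, and suppose a·a⋆ + b·b⋆ = 1, E²b⋆R² + (E²a⋆ − a)R + b = 0, and E⁻²bR⋆² + (E⁻²a − a⋆)R⋆ + b⋆ = 0. Then the 2×2 matrix factorization identity holds: [[1, −(R − b/a)],[0, 1]] · diag(1/a, a) · [[1, 0],[−E⁻²R⋆ − b⋆/a, 1]] = [[1, 0],[−R⋆/(1 + R⋆R), 1]] · diag((1 + R⋆R)/(a + bR⋆), (a + bR⋆)/(1 + R⋆R)) · [[1, −E²R/(1 + R⋆R)],[0, 1]]. -/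
open Matrix

/-- Triangular factorization of the jump matrix `J₀` on `iℝ₊` (Proposition 4.6):
`[[1, −G₂],[0, 1]] · diag(1/a, a) · [[1, 0],[G, 1]]
  = [[1, 0],[−L, 1]] · diag(D₃, D₃⁻¹) · [[1, U],[0, 1]]`. -/
theorem triangular_factorization_imaginary_axis (a as b bs R Rs E : ℂ)
    (ha : a ≠ 0) (has : as ≠ 0) (hE : E ≠ 0)
    (hR : 1 + Rs * R ≠ 0) (habR : a + b * Rs ≠ 0) (hasR : as + bs * R ≠ 0)
    (hdet : a * as + b * bs = 1)
    (hq1 : E ^ 2 * bs * R ^ 2 + (E ^ 2 * as - a) * R + b = 0)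
    (hq2 : (E ^ 2)⁻¹ * b * Rs ^ 2 + ((E ^ 2)⁻¹ * a - as) * Rs + bs = 0) :
    !![1, -(R - b / a); 0, 1]
        * !![1 / a, 0; 0, a]
        * !![1, 0; -(E ^ 2)⁻¹ * Rs - bs / a, 1]
      = !![1, 0; -Rs / (1 + Rs * R), 1]
        * !![(1 + Rs * R) / (a + b * Rs), 0; 0, (a + b * Rs) / (1 + Rs * R)]
        * !![1, -E ^ 2 * R / (1 + Rs * R); 0, 1] := by
  have hE2 : (E : ℂ) ^ 2 ≠ 0 := pow_ne_zero _ hE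
  have h1 : E ^ 2 * ((as + bs * R) * R) = a * R - b := by linear_combination hq1
  have h2 : (E ^ 2)⁻¹ * ((a + b * Rs) * Rs) = as * Rs - bs := by linear_combination hq2
  have h2' : (a + b * Rs) * Rs = E ^ 2 * (as * Rs - bs) := by
    calc (a + b * Rs) * Rs = E ^ 2 * ((E ^ 2)⁻¹ * ((a + b * Rs) * Rs)) := by field_simp
      _ = E ^ 2 * (as * Rs - bs) := by rw [h2]
  have hk : (a + b * Rs) * (as + bs * R) = 1 := by
    have h3 : (a + b * Rs) * (as + bs * R) * (R * Rs) = (a * R - b) * (as * Rs - bs) := by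
      have h := congrArg₂ (· * ·) h1 h2
      field_simp at h
      have h3' : E ^ 2 * ((a + b * Rs) * (as + bs * R) * (R * Rs))
          = E ^ 2 * ((a * R - b) * (as * Rs - bs)) := by
          linear_combination (a + b * Rs) * Rs * h1 + (a * R - b) * h2'
      exact mul_left_cancel₀ hE2 h3'
    have h4 : (1 + Rs * R) * ((a + b * Rs) * (as + bs * R) - 1) = 0 := by
      linear_combination h3 + (R * Rs + 1) * hdet
    rcases mul_eq_zero.mp h4 with h | h
    · exact absurd h hR
    · linear_combination h
  have hknew : a * bs * R + b * as * Rs + b * bs * (Rs * R) = b * bs := by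
    linear_combination hk - hdet
  have e1 : E ^ 2 * R = (a * R - b) * (a + b * Rs) := by
    calc E ^ 2 * R = E ^ 2 * ((as + bs * R) * R) * (a + b * Rs) := by
          linear_combination (E ^ 2 * R) * hk.symm
      _ = (a * R - b) * (a + b * Rs) := by rw [h1]
  have e2 : (E ^ 2)⁻¹ * Rs = (as * Rs - bs) * (as + bs * R) := by
    calc (E ^ 2)⁻¹ * Rs = (E ^ 2)⁻¹ * ((a + b * Rs) * Rs) * (as + bs * R) := by
          linear_combination ((E ^ 2)⁻¹ * Rs) * hk.symm
      _ = (as * Rs - bs) * (as + bs * R) := by rw [h2]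
  have hR' : 1 + R * Rs ≠ 0 := by rwa [mul_comm]
  have habR' : a + Rs * b ≠ 0 := by rwa [mul_comm]
  ext i j
  fin_cases i <;> fin_cases j <;>
    simp [Matrix.mul_apply, Fin.sum_univ_succ] <;>
    field_simp <;>
    (try rw [e1]) <;> (try rw [e2]) <;>
    ring_nf <;>
    first
    | linear_combination (E ^ 2 * a) * hknew - (E ^ 2 * b * Rs) * hdet
        + (a * R * Rs * E ^ 2) * hk - (a * Rs * (a + b * Rs)) * hq1
    | linear_combination (-(a ^ 2 * (1 + Rs * R))) * h2'
        - (a * E ^ 2 * Rs * (1 + Rs * R)) * hdet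
    | linear_combination e1
    | linear_combination (-Rs) * e1
    | linear_combination (-a) * h2' - E ^ 2 * Rs * hdet
    | linear_combination (-a * Rs) * e1 + E ^ 2 * a * hknew + E ^ 2 * b * Rs * hdet
end

section
/- Let R⁺, R⁻, R⋆⁺, R⋆⁻ ∈ ℂ satisfy 1 + R⁺·R⋆⁻ = 0 and 1 + R⁻·R⋆⁺ = 0, and suppose 1 + R⋆⁺R⁺ ≠ 0 and 1 + R⋆⁻R⁻ ≠ 0. Then R⁺ ≠ R⁻ and the 2×2 matrix product [[1, 0],[R⋆⁻/(1 + R⋆⁻R⁻), 1]] · [[1, R⁺ − R⁻],[0, 1]] · [[1, 0],[−R⋆⁺/(1 + R⋆⁺R⁺), 1]] equals [[0, R⁺ − R⁻],[1/(R⁻ − R⁺), 0]]. -/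
open Matrix

/-- If `1 + R⁺R⋆⁻ = 0 = 1 + R⁻R⋆⁺` with `1 + R⋆⁺R⁺ ≠ 0 ≠ 1 + R⋆⁻R⁻`, then `R⁺ ≠ R⁻` and
`[[1, 0],[R⋆⁻/(1 + R⋆⁻R⁻), 1]] · [[1, R⁺ − R⁻],[0, 1]] · [[1, 0],[−R⋆⁺/(1 + R⋆⁺R⁺), 1]]
  = [[0, R⁺ − R⁻],[1/(R⁻ − R⁺), 0]]` (jump formula (4.35)). -/
theorem jump_formula_on_band (Rp Rm Rsp Rsm : ℂ)
    (h1 : 1 + Rp * Rsm = 0) (h2 : 1 + Rm * Rsp = 0)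
    (h3 : 1 + Rsp * Rp ≠ 0) (h4 : 1 + Rsm * Rm ≠ 0) :
    Rp ≠ Rm ∧
      !![1, 0; Rsm / (1 + Rsm * Rm), 1]
          * !![1, Rp - Rm; 0, 1]
          * !![1, 0; -Rsp / (1 + Rsp * Rp), 1]
        = !![0, Rp - Rm; 1 / (Rm - Rp), 0] := by
  have hne : Rp ≠ Rm := by
    rintro rfl
    exact h3 (by linear_combination h2)
  have hsub : Rm - Rp ≠ 0 := sub_ne_zero.mpr (Ne.symm hne)
  refine ⟨hne, ?_⟩
  have h3' : 1 + Rp * Rsp ≠ 0 := by rwa [mul_comm] at h3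
  ext i j
  fin_cases i <;> fin_cases j <;>
    simp [Matrix.mul_apply, Fin.sum_univ_two] <;>
    field_simp <;> ring_nf <;>
    first
      | linear_combination h1
      | linear_combination h2
      | linear_combination (-(1 + Rsm * Rm) * (1 + Rm * Rsp)) * h1
      | linear_combination (-(1 + Rm * Rsp)) * h1
end

section
/- Let L > 0, ξ ∈ ℂ, and let a, a⋆, b, b⋆ : ℂ → ℂ be continuous at ξ. Let R be a complex-valued function defined on a punctured neighborhood of ξ such that |R(z)| → ∞ as z → ξ, and suppose that e^{2izL}·b⋆(z)·R(z)² + (e^{2izL}·a⋆(z) − a(z))·R(z) + b(z) = 0 for all z in that punctured neighborhood. Then (i) b⋆(ξ) = 0; (ii) b⋆(z)·R(z) → e^{−2iξL}·a(ξ) − a⋆(ξ) as z → ξ; and (iii) a⋆(z) + b⋆(z)·R(z) → e^{−2iξL}·a(ξ) as z → ξ. -/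
open Filter Topology

/-- Pole relations (4.20)–(4.21): if `|R(z)| → ∞` as `z → ξ` and
`e^{2izL}b⋆R² + (e^{2izL}a⋆ − a)R + b = 0` near `ξ`, then `b⋆(ξ) = 0`,
`b⋆R → e^{−2iξL}a(ξ) − a⋆(ξ)`, and `a⋆ + b⋆R → e^{−2iξL}a(ξ)` as `z → ξ`. -/
theorem pole_relations (L : ℝ) (hL : 0 < L) (ξ : ℂ) (a as b bs R : ℂ → ℂ)
    (ha : ContinuousAt a ξ) (has : ContinuousAt as ξ)
    (hb : ContinuousAt b ξ) (hbs : ContinuousAt bs ξ)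
    (hRtends : Tendsto (fun z => ‖R z‖) (𝓝[≠] ξ) atTop)
    (hquad : ∀ᶠ z in 𝓝[≠] ξ,
      Complex.exp (2 * Complex.I * z * (L : ℂ)) * bs z * R z ^ 2
        + (Complex.exp (2 * Complex.I * z * (L : ℂ)) * as z - a z) * R z + b z = 0) :
    bs ξ = 0
    ∧ Tendsto (fun z => bs z * R z) (𝓝[≠] ξ)
        (𝓝 (Complex.exp (-2 * Complex.I * ξ * (L : ℂ)) * a ξ - as ξ))
    ∧ Tendsto (fun z => as z + bs z * R z) (𝓝[≠] ξ)
        (𝓝 (Complex.exp (-2 * Complex.I * ξ * (L : ℂ)) * a ξ)) := by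
  set e : ℂ → ℂ := fun z => Complex.exp (2 * Complex.I * z * (L : ℂ)) with he
  have hec : ContinuousAt e ξ :=
    (Complex.continuous_exp.comp (by fun_prop)).continuousAt
  have hene : ∀ z, e z ≠ 0 := fun z => Complex.exp_ne_zero _
  have hne : ∀ᶠ z in 𝓝[≠] ξ, R z ≠ 0 := by
    filter_upwards [hRtends.eventually (eventually_gt_atTop 0)] with z hz
    intro h
    simp [h] at hz
  have hinv : Tendsto (fun z => (R z)⁻¹) (𝓝[≠] ξ) (𝓝 0) := by
    rw [tendsto_zero_iff_norm_tendsto_zero]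
    exact (tendsto_inv_atTop_zero.comp hRtends).congr fun z => by
      simp
  -- limit of e z * bs z along the punctured filter is 0
  have key0 : Tendsto (fun z => e z * bs z) (𝓝[≠] ξ) (𝓝 0) := by
    have hform : (fun z => e z * bs z) =ᶠ[𝓝[≠] ξ]
        fun z => -((e z * as z - a z) * (R z)⁻¹) - b z * ((R z)⁻¹) ^ 2 := by
      filter_upwards [hquad, hne] with z hq hz
      have hq' : e z * bs z * R z ^ 2 + (e z * as z - a z) * R z + b z = 0 := hq
      field_simp
      linear_combination hq'
    have h1 : Tendsto (fun z => (e z * as z - a z)) (𝓝[≠] ξ)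
        (𝓝 (e ξ * as ξ - a ξ)) := ((hec.mul has).sub ha).continuousWithinAt
    have h2 : Tendsto b (𝓝[≠] ξ) (𝓝 (b ξ)) := hb.continuousWithinAt
    have hlim := Filter.Tendsto.sub (Filter.Tendsto.neg (h1.mul hinv))
      (h2.mul (hinv.pow 2))
    simp only [mul_zero, neg_zero, zero_pow, sub_zero] at hlim
    exact (Filter.Tendsto.congr' hform.symm (by simpa using hlim))
  have hbsξ : bs ξ = 0 := by
    have hlim2 : Tendsto (fun z => e z * bs z) (𝓝[≠] ξ) (𝓝 (e ξ * bs ξ)) :=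
      (hec.mul hbs).continuousWithinAt
    have := tendsto_nhds_unique hlim2 key0
    exact (mul_eq_zero.mp this).resolve_left (hene ξ)
  -- limit of bs z * R z
  have heinv : (e ξ)⁻¹ = Complex.exp (-2 * Complex.I * ξ * (L : ℂ)) := by
    rw [he]
    simp only
    rw [← Complex.exp_neg]
    ring_nf
  have key2 : Tendsto (fun z => bs z * R z) (𝓝[≠] ξ)
      (𝓝 (Complex.exp (-2 * Complex.I * ξ * (L : ℂ)) * a ξ - as ξ)) := by
    have hform : (fun z => bs z * R z) =ᶠ[𝓝[≠] ξ]
        fun z => (a z - e z * as z - b z * (R z)⁻¹) * (e z)⁻¹ := by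
      filter_upwards [hquad, hne] with z hq hz
      have hq' : e z * bs z * R z ^ 2 + (e z * as z - a z) * R z + b z = 0 := hq
      have hE := hene z
      field_simp
      linear_combination hq'
    have h1 : Tendsto (fun z => (a z - e z * as z - b z * (R z)⁻¹) * (e z)⁻¹)
        (𝓝[≠] ξ) (𝓝 ((a ξ - e ξ * as ξ - b ξ * 0) * (e ξ)⁻¹)) :=
      Filter.Tendsto.mul
        (Filter.Tendsto.sub
          (Filter.Tendsto.sub ha.continuousWithinAt (hec.mul has).continuousWithinAt)
          (Filter.Tendsto.mul hb.continuousWithinAt hinv))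
        (Filter.Tendsto.inv₀ hec.continuousWithinAt (hene ξ))
    have heq : (a ξ - e ξ * as ξ - b ξ * 0) * (e ξ)⁻¹
        = Complex.exp (-2 * Complex.I * ξ * (L : ℂ)) * a ξ - as ξ := by
      rw [← heinv]
      field_simp [hene ξ]
      ring
    rw [heq] at h1
    exact Filter.Tendsto.congr' hform.symm h1
  refine ⟨hbsξ, key2, ?_⟩
  have h3 := Filter.Tendsto.add (has.continuousWithinAt :
    Tendsto as (𝓝[≠] ξ) (𝓝 (as ξ))) key2
  convert h3 using 2
  ring
end

section
/- Let z₀, z₁, μ ∈ ℂ, q ∈ ℂ with q ≠ 0, and a₁, a₀ ∈ ℝ, and suppose that the polynomial identity (X² + a₁X + a₀)² = (X − z₀)(X − conj z₀)(X − z₁)(X − conj z₁) − |q|²·(X − μ)(X − conj μ) holds in ℂ[X]. Then: a₁ = −(Re z₀ + Re z₁); a₀ = (1/2)·(−(Re z₀ + Re z₁)² + |z₀|² + |z₁|² + 4·Re z₀·Re z₁ − |q|²); Re μ = (a₁·a₀ + Re z₁·|z₀|² + Re z₀·|z₁|²)/|q|²; and (Im μ)² = (|z₀|²·|z₁|² −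 a₀²)/|q|² − (Re μ)². -/
open Polynomial

/-- The genus-1 coefficient formulas (6.2): the polynomial identity
`(X² + a₁X + a₀)² = (X − z₀)(X − conj z₀)(X − z₁)(X − conj z₁) − |q|²(X − μ)(X − conj μ)`
determines `a₁`, `a₀`, `Re μ`, and `(Im μ)²` in terms of `z₀`, `z₁`, `q`. -/
theorem genus_one_coefficient_formulas (z₀ z₁ μ : ℂ) (q : ℂ) (hq : q ≠ 0) (a₁ a₀ : ℝ)
    (hpoly : (X ^ 2 + C (a₁ : ℂ) * X + C (a₀ : ℂ)) ^ 2
      = (X - C z₀) * (X - C (starRingEnd ℂ z₀)) * (X - C z₁) * (X - C (starRingEnd ℂ z₁))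
        - C ((‖q‖ : ℂ) ^ 2) * ((X - C μ) * (X - C (starRingEnd ℂ μ)))) :
    a₁ = -(z₀.re + z₁.re)
    ∧ a₀ = (1 / 2) * (-(z₀.re + z₁.re) ^ 2 + ‖z₀‖ ^ 2 + ‖z₁‖ ^ 2
        + 4 * z₀.re * z₁.re - ‖q‖ ^ 2)
    ∧ μ.re = (a₁ * a₀ + z₁.re * ‖z₀‖ ^ 2 + z₀.re * ‖z₁‖ ^ 2)
        / ‖q‖ ^ 2
    ∧ μ.im ^ 2 = (‖z₀‖ ^ 2 * ‖z₁‖ ^ 2 - a₀ ^ 2) / ‖q‖ ^ 2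
        - μ.re ^ 2 := by
  have hQ : (0:ℝ) < ‖q‖ ^ 2 := pow_pos (norm_pos_iff.mpr hq) 2
  ring_nf at hpoly
  have h3 := congrArg (fun p => Polynomial.coeff p 3) hpoly
  have h2 := congrArg (fun p => Polynomial.coeff p 2) hpoly
  have h1 := congrArg (fun p => Polynomial.coeff p 1) hpoly
  have h0 := congrArg (fun p => Polynomial.coeff p 0) hpoly
  simp only [coeff_add, coeff_sub, coeff_neg, coeff_mul_C, coeff_X_pow, coeff_X, coeff_C,
    coeff_ofNat_mul, coeff_mul_ofNat, ← C_pow] at h3 h2 h1 h0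
  norm_num at h3 h2 h1 h0
  have h3r := congrArg Complex.re h3
  have h2r := congrArg Complex.re h2
  have h1r := congrArg Complex.re h1
  have h0r := congrArg Complex.re h0
  simp only [Complex.add_re, Complex.sub_re, Complex.neg_re, Complex.mul_re, Complex.mul_im,
    Complex.conj_re, Complex.conj_im, Complex.ofReal_re, Complex.ofReal_im,
    ← Complex.ofReal_pow, Complex.re_ofNat, Complex.im_ofNat] at h3r h2r h1r h0r
  ring_nf at h3r h2r h1r h0r
  have habs0 : ‖z₀‖ ^ 2 = z₀.re ^ 2 + z₀.im ^ 2 := by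
    rw [Complex.sq_norm, Complex.normSq_apply]; ring
  have habs1 : ‖z₁‖ ^ 2 = z₁.re ^ 2 + z₁.im ^ 2 := by
    rw [Complex.sq_norm, Complex.normSq_apply]; ring
  have ha1 : a₁ = -(z₀.re + z₁.re) := by linarith
  subst ha1
  refine ⟨rfl, ?_, ?_, ?_⟩
  · rw [habs0, habs1]; linear_combination h2r / 2
  · rw [habs0, habs1]; field_simp
    linear_combination - h1r / 2
  · rw [habs0, habs1]; field_simp
    linear_combination h0r
end
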